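/- Recurrence for the probability that a sum of uniform units hits a nonzero target: for every integer k ≥ 2 and every nonzero a ∈ ZMod q, N k a = N (k−1) 0 + (q − 2) · N (k−1) a. Equivalently, writing z⁽ᵏ⁾ and p⁽ᵏ⁾ for the probabilities that the sum of k independent uniform elements of (ZMod q)ˣ equals 0 and equals a respectively, p⁽ᵏ⁾ = p⁽ᵏ⁻¹⁾ + (z⁽ᵏ⁻¹⁾ − p⁽ᵏ⁻¹⁾)/(q − 1). -/

import Mathlib

/-- Number of tuples of `k` units of `ZMod q` whose sum equals `s`. -/
def unitSumCount (q : ℕ) [Fact (Nat.Prime q)] (k : ℕ) (s : ZMod q) : ℕ :=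
  (Finset.univ.filter (fun r : Fin k → (ZMod q)ˣ => ∑ i, ((r i : ZMod q)) = s)).card

lemma unitSumCount_eq_card (q : ℕ) [Fact (Nat.Prime q)] (k : ℕ) (s : ZMod q) :
    unitSumCount q k s =
      Fintype.card {r : Fin k → (ZMod q)ˣ // ∑ i, ((r i : ZMod q)) = s} := by
  classical
  rw [unitSumCount, Fintype.card_subtype]

lemma unitSumCount_succ (q : ℕ) [Fact (Nat.Prime q)] (k : ℕ) (s : ZMod q) :
    unitSumCount q (k + 1) s = ∑ u : (ZMod q)ˣ, unitSumCount q k (s - u) := by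
  classical
  have e : {r : Fin (k+1) → (ZMod q)ˣ // ∑ i, ((r i : ZMod q)) = s} ≃
      Σ u : (ZMod q)ˣ, {r : Fin k → (ZMod q)ˣ // ∑ i, ((r i : ZMod q)) = s - u} :=
    { toFun := fun r => ⟨r.1 0, Fin.tail r.1, by
        have hr := r.2
        rw [Fin.sum_univ_succ] at hr
        exact eq_sub_of_add_eq' hr⟩
      invFun := fun p => ⟨Fin.cons p.1 p.2.1, by
        have h := p.2.2
        rw [Fin.sum_univ_succ]
        simp [h]⟩
      left_inv := fun r => by
        apply Subtype.ext
        exact Fin.cons_self_tail r.1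
      right_inv := fun p => by
        apply Sigma.ext
        · simp
        · simp [Fin.tail_cons]
          exact HEq.rfl }
  rw [unitSumCount_eq_card, Fintype.card_congr e, Fintype.card_sigma]
  simp [unitSumCount_eq_card]

lemma unitSumCount_nonzero_eq (q : ℕ) [Fact (Nat.Prime q)] (k : ℕ) {s t : ZMod q}
    (hs : s ≠ 0) (ht : t ≠ 0) : unitSumCount q k s = unitSumCount q k t := by
  classical
  set c : (ZMod q)ˣ := Units.mk0 t ht * (Units.mk0 s hs)⁻¹ with hc
  have hcs : (c : ZMod q) * s = t := by
    rw [hc]; simp [hs]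
  have hst : (c : ZMod q)⁻¹ * t = s := by
    rw [← hcs]; field_simp
  apply Finset.card_bij (fun r _ => fun i => c * r i)
  · intro r hr
    simp only [Finset.mem_filter, Finset.mem_univ, true_and] at hr ⊢
    simp only [Units.val_mul, ← Finset.mul_sum, hr, hcs]
  · intro r₁ h₁ r₂ h₂ h
    funext i
    have := congrFun h i
    exact mul_left_cancel this
  · intro r hr
    refine ⟨fun i => c⁻¹ * r i, ?_, ?_⟩
    · simp only [Finset.mem_filter, Finset.mem_univ, true_and] at hr ⊢
      simp only [Units.val_mul, ← Finset.mul_sum, hr]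
      rw [Units.val_inv_eq_inv_val]; exact hst
    · funext i; simp

theorem unitSumCount_nonzero_rec (q : ℕ) [Fact (Nat.Prime q)] (k : ℕ) (hk : 2 ≤ k)
    (a : ZMod q) (ha : a ≠ 0) :
    unitSumCount q k a = unitSumCount q (k - 1) 0 + (q - 2) * unitSumCount q (k - 1) a := by
  classical
  obtain ⟨m, rfl⟩ : ∃ m, k = m + 1 := ⟨k - 1, by omega⟩
  simp only [Nat.add_sub_cancel]
  rw [unitSumCount_succ]
  set ua : (ZMod q)ˣ := Units.mk0 a ha with hua
  rw [← Finset.add_sum_erase _ _ (Finset.mem_univ ua)]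
  have h0 : a - (ua : ZMod q) = 0 := by
    rw [show ((ua : ZMod q)) = a from rfl]; exact sub_self a
  rw [h0]
  congr 1
  have hsum : ∀ u ∈ Finset.univ.erase ua, unitSumCount q m (a - u) = unitSumCount q m a := by
    intro u hu
    have hne : (u : ZMod q) ≠ a := by
      intro h
      exact (Finset.mem_erase.mp hu).1 (Units.ext h)
    exact unitSumCount_nonzero_eq q m (sub_ne_zero.mpr (fun h => hne h.symm)) ha
  rw [Finset.sum_congr rfl hsum, Finset.sum_const, smul_eq_mul]
  congr 1
  rw [Finset.card_erase_of_mem (Finset.mem_univ _), Finset.card_univ, ZMod.card_units_eq_totient,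
    Nat.totient_prime (Fact.out)]
  have hq : 2 ≤ q := (Fact.out : Nat.Prime q).two_le
  omega
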